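/- arXiv:2308.09261 — 2 statements merged into one kernel-verified Lean document; each statement's English description precedes it below -/
import Mathlib

section
/- Let B and C be bounded linear operators on H that are A-selfadjoint. Then (1/2)·‖B² + C²‖_A + (1/2)·max{‖B‖_A, ‖C‖_A}·| ‖B+C‖_A − ‖B−C‖_A | ≤ (w_{A,e}(B,C))². -/
noncomputable section

open scoped ComplexInnerProductSpace

variable {H : Type*} [NormedAddCommGroup H] [InnerProductSpace ℂ H] [CompleteSpace H]

/-- The semi-inner product induced by a positive operator `A`:
`⟨x,y⟩_A = ⟨Ax,y⟩` (linear in the first argument, following the paper's convention). -/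
def innerA (A : H →L[ℂ] H) (x y : H) : ℂ := ⟪y, A x⟫

/-- The seminorm induced by `A`: `‖x‖_A = ⟨Ax,x⟩^{1/2}`. -/
def normA (A : H →L[ℂ] H) (x : H) : ℝ := Real.sqrt (innerA A x x).re

/-- The `A`-numerical radius `w_A(T) = sup { |⟨Tx,x⟩_A| : ‖x‖_A = 1 }`. -/
def wA (A T : H →L[ℂ] H) : ℝ :=
  sSup {r : ℝ | ∃ x : H, normA A x = 1 ∧ r = ‖innerA A (T x) x‖}

/-- The `A`-Crawford number `c_A(T) = inf { |⟨Tx,x⟩_A| : ‖x‖_A = 1 }`. -/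
def cA (A T : H →L[ℂ] H) : ℝ :=
  sInf {r : ℝ | ∃ x : H, normA A x = 1 ∧ r = ‖innerA A (T x) x‖}

/-- The `A`-operator seminorm `‖T‖_A = sup { ‖Tx‖_A : ‖x‖_A = 1 }`. -/
def opNormA (A T : H →L[ℂ] H) : ℝ :=
  sSup {r : ℝ | ∃ x : H, normA A x = 1 ∧ r = normA A (T x)}

/-- The `A`-Euclidean operator radius of the pair `(B, C)`. -/
def wAe (A B C : H →L[ℂ] H) : ℝ :=
  sSup {r : ℝ | ∃ x : H, normA A x = 1 ∧
    r = Real.sqrt ((‖innerA A (B x) x‖)^2 + (‖innerA A (C x) x‖)^2)}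

/-- The `A`-Euclidean operator seminorm of the pair `(B, C)`. -/
def normAe (A B C : H →L[ℂ] H) : ℝ :=
  sSup {r : ℝ | ∃ x : H, normA A x = 1 ∧
    r = Real.sqrt ((normA A (B x))^2 + (normA A (C x))^2)}

/-- `Re_A(T) = (T + T♯)/2`, where `Ts` is an `A`-adjoint of `T`. -/
def ReA (T Ts : H →L[ℂ] H) : H →L[ℂ] H := (2 : ℂ)⁻¹ • (T + Ts)

/-- `Im_A(T) = (T - T♯)/(2i)`, where `Ts` is an `A`-adjoint of `T`. -/
def ImA (T Ts : H →L[ℂ] H) : H →L[ℂ] H := (2 * Complex.I)⁻¹ • (T - Ts)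


/-! ### Auxiliary lemmas -/

private lemma selfadj_inner_move (P : H →L[ℂ] H) (hP : IsSelfAdjoint P) (x y : H) :
    ⟪y, P x⟫ = ⟪P y, x⟫ := by
  nth_rewrite 2 [← hP.adjoint_eq]
  exact (ContinuousLinearMap.adjoint_inner_left P x y).symm

private lemma limit_pow {r c K : ℝ} (hr : 0 ≤ r) (hc : 0 ≤ c)
    (h : ∀ n : ℕ, r ^ (2^n) ≤ K * c ^ (2^n)) : r ≤ c := by
  by_contra hlt
  push_neg at hlt
  rcases hc.eq_or_lt with h0 | h0
  · have h1 := h 0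
    rw [← h0] at hlt h1
    norm_num at h1
    linarith
  · have hr1 : 1 < r / c := (one_lt_div h0).mpr hlt
    obtain ⟨n, hn⟩ := pow_unbounded_of_one_lt K hr1
    have h2 : (r/c)^n ≤ (r/c)^(2^n) :=
      pow_le_pow_right₀ hr1.le (Nat.le_of_lt (Nat.lt_two_pow_self))
    have h3 : (r/c)^(2^n) ≤ K := by
      rw [div_pow, div_le_iff₀ (by positivity)]
      exact h n
    linarith

section SA
variable {A S T : H →L[ℂ] H}

private lemma inner_SS (hS : IsSelfAdjoint S) (hS2 : S * S = A) (x y : H) :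
    ⟪S y, S x⟫ = ⟪y, A x⟫ := by
  rw [← hS2]
  simp only [ContinuousLinearMap.mul_apply]
  exact (selfadj_inner_move S hS (S x) y).symm

private lemma normA_eqS (hS : IsSelfAdjoint S) (hS2 : S * S = A) (x : H) :
    normA A x = ‖S x‖ := by
  have h1 : innerA A x x = ⟪S x, S x⟫ := by rw [innerA, inner_SS hS hS2]
  have h2 : (⟪S x, S x⟫).re = ‖S x‖^2 := inner_self_eq_norm_sq (𝕜 := ℂ) _
  rw [normA, h1, h2, Real.sqrt_sq (norm_nonneg _)]

private lemma innerA_abs_le (hS : IsSelfAdjoint S) (hS2 : S * S = A) (x y : H) :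
    ‖innerA A x y‖ ≤ ‖S y‖ * ‖S x‖ := by
  rw [innerA, ← inner_SS hS hS2]
  exact norm_inner_le_norm _ _

private lemma moveT (hT : A.comp T = (ContinuousLinearMap.adjoint T).comp A) (x y : H) :
    ⟪y, A (T x)⟫ = ⟪T y, A x⟫ := by
  have h1 : A (T x) = (ContinuousLinearMap.adjoint T) (A x) := by
    have := ContinuousLinearMap.ext_iff.mp hT x
    simpa using this
  rw [h1]
  exact ContinuousLinearMap.adjoint_inner_right T y (A x)

private lemma moveTn (hT : A.comp T = (ContinuousLinearMap.adjoint T).comp A) :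
    ∀ (n : ℕ) (x y : H), ⟪y, A ((T^n) x)⟫ = ⟪(T^n) y, A x⟫ := by
  intro n
  induction n with
  | zero => intro x y; simp
  | succ n ih =>
    intro x y
    have e1 : (T^(n+1)) x = (T^n) (T x) := by
      rw [pow_succ]; simp [ContinuousLinearMap.mul_apply]
    have e2 : (T^(n+1)) y = T ((T^n) y) := by
      rw [pow_succ']; simp [ContinuousLinearMap.mul_apply]
    rw [e1, ih (T x) y, moveT hT, e2]

private lemma stepk (hS : IsSelfAdjoint S) (hS2 : S * S = A)
    (hT : A.comp T = (ContinuousLinearMap.adjoint T).comp A) (k : ℕ) (x : H) :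
    ‖S ((T^k) x)‖^2 ≤ ‖S x‖ * ‖S ((T^k) ((T^k) x))‖ := by
  have h1 : (‖S ((T^k) x)‖:ℝ)^2 = (⟪S ((T^k) x), S ((T^k) x)⟫).re :=
    (inner_self_eq_norm_sq (𝕜 := ℂ) _).symm
  rw [h1, inner_SS hS hS2, moveTn hT k, ← inner_SS hS hS2]
  calc (⟪S ((T^k) ((T^k) x)), S x⟫).re
      ≤ ‖⟪S ((T^k) ((T^k) x)), S x⟫‖ := Complex.re_le_norm _
    _ ≤ ‖S ((T^k) ((T^k) x))‖ * ‖S x‖ := by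
        exact norm_inner_le_norm _ _
    _ = ‖S x‖ * ‖S ((T^k) ((T^k) x))‖ := mul_comm _ _

private lemma mainQ (hS : IsSelfAdjoint S) (hS2 : S * S = A)
    (hT : A.comp T = (ContinuousLinearMap.adjoint T).comp A) :
    ∀ (n : ℕ) (x : H),
      ‖S (T x)‖^(2^n) * ‖S x‖ ≤ ‖S x‖^(2^n) * ‖S ((T^(2^n)) x)‖ := by
  intro n
  induction n with
  | zero =>
    intro x
    simp [mul_comm]
  | succ n ih =>
    intro x
    set a := ‖S (T x)‖ with ha
    set c := ‖S x‖ with hc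
    set b := ‖S ((T^(2^n)) x)‖ with hb
    set b' := ‖S ((T^(2^(n+1))) x)‖ with hb'
    have hRa : (T^(2^(n+1))) x = (T^(2^n)) ((T^(2^n)) x) := by
      rw [show 2^(n+1) = 2^n + 2^n by ring, pow_add]
      simp [ContinuousLinearMap.mul_apply]
    have hR : b^2 ≤ c * b' := by
      rw [hb, hb', hRa]
      exact stepk hS hS2 hT (2^n) x
    have hihn := ih x
    have ea : a^(2^(n+1)) = (a^(2^n))^2 := by rw [← pow_mul, pow_succ]
    have ec : c^(2^(n+1)) = (c^(2^n))^2 := by rw [← pow_mul, pow_succ]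
    rcases (norm_nonneg (S x)).eq_or_lt with h0 | h0
    · rw [← hc] at h0
      rw [← h0]
      simp only [mul_zero]
      positivity
    · rw [← hc] at h0
      have hsq : (a^(2^n) * c) * (a^(2^n) * c) ≤ (c^(2^n) * b) * (c^(2^n) * b) :=
        mul_le_mul hihn hihn (by positivity) (by positivity)
      have key : (a^(2^(n+1)) * c) * c ≤ (c^(2^(n+1)) * b') * c := by
        calc (a^(2^(n+1)) * c) * c = (a^(2^n) * c) * (a^(2^n) * c) := by rw [ea]; ring
          _ ≤ (c^(2^n) * b) * (c^(2^n) * b) := hsq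
          _ = (c^(2^n))^2 * b^2 := by ring
          _ ≤ (c^(2^n))^2 * (c * b') := by
              have : (0:ℝ) ≤ (c^(2^n))^2 := by positivity
              exact mul_le_mul_of_nonneg_left hR this
          _ = (c^(2^(n+1)) * b') * c := by rw [ec]; ring
      exact le_of_mul_le_mul_right key h0

private lemma K1 (hS : IsSelfAdjoint S) (hS2 : S * S = A)
    (hT : A.comp T = (ContinuousLinearMap.adjoint T).comp A) (x : H) :
    ‖S (T x)‖ ≤ ‖T‖ * ‖S x‖ := by
  by_cases hc : ‖S x‖ = 0
  · have h2 := stepk hS hS2 hT 1 x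
    simp only [pow_one, hc, zero_mul] at h2
    have h3 : ‖S (T x)‖ = 0 := by nlinarith [norm_nonneg (S (T x))]
    rw [h3, hc, mul_zero]
  · have hcpos : 0 < ‖S x‖ := (norm_nonneg _).lt_of_ne' hc
    apply limit_pow (norm_nonneg _) (by positivity : (0:ℝ) ≤ ‖T‖ * ‖S x‖)
      (K := ‖S‖ * ‖x‖ / ‖S x‖)
    intro n
    have hmain := mainQ hS hS2 hT n x
    have hb : ‖S ((T^(2^n)) x)‖ ≤ ‖S‖ * ‖T‖^(2^n) * ‖x‖ := by
      calc ‖S ((T^(2^n)) x)‖ ≤ ‖S‖ * ‖(T^(2^n)) x‖ := S.le_opNorm _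
        _ ≤ ‖S‖ * (‖T^(2^n)‖ * ‖x‖) :=
            mul_le_mul_of_nonneg_left ((T^(2^n)).le_opNorm x) (norm_nonneg S)
        _ ≤ ‖S‖ * (‖T‖^(2^n) * ‖x‖) := by
            have h4 : ‖T^(2^n)‖ ≤ ‖T‖^(2^n) := norm_pow_le' T (by positivity)
            have h5 : ‖T^(2^n)‖ * ‖x‖ ≤ ‖T‖^(2^n) * ‖x‖ :=
              mul_le_mul_of_nonneg_right h4 (norm_nonneg x)
            exact mul_le_mul_of_nonneg_left h5 (norm_nonneg S)
        _ = ‖S‖ * ‖T‖^(2^n) * ‖x‖ := by ring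
    rw [mul_pow, ← mul_le_mul_iff_left₀ hcpos]
    calc ‖S (T x)‖^(2^n) * ‖S x‖ ≤ ‖S x‖^(2^n) * ‖S ((T^(2^n)) x)‖ := hmain
      _ ≤ ‖S x‖^(2^n) * (‖S‖ * ‖T‖^(2^n) * ‖x‖) :=
          mul_le_mul_of_nonneg_left hb (by positivity)
      _ = ‖S‖ * ‖x‖ / ‖S x‖ * (‖T‖^(2^n) * ‖S x‖^(2^n)) * ‖S x‖ := by
          field_simp

private lemma opA_nonneg (A T : H →L[ℂ] H) : 0 ≤ opNormA A T := by
  unfold opNormA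
  exact Real.sSup_nonneg (by rintro r ⟨x, hx, rfl⟩; exact Real.sqrt_nonneg _)

private lemma wA_nonneg (A T : H →L[ℂ] H) : 0 ≤ wA A T := by
  unfold wA
  exact Real.sSup_nonneg (by rintro r ⟨x, hx, rfl⟩; exact norm_nonneg _)

private lemma opA_bdd (hS : IsSelfAdjoint S) (hS2 : S * S = A)
    (hT : A.comp T = (ContinuousLinearMap.adjoint T).comp A) :
    BddAbove {r : ℝ | ∃ x : H, normA A x = 1 ∧ r = normA A (T x)} := by
  refine ⟨‖T‖, ?_⟩
  rintro r ⟨x, hx, rfl⟩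
  rw [normA_eqS hS hS2] at hx ⊢
  calc ‖S (T x)‖ ≤ ‖T‖ * ‖S x‖ := K1 hS hS2 hT x
    _ = ‖T‖ := by rw [hx, mul_one]

private lemma unit_vec (hS : IsSelfAdjoint S) (hS2 : S * S = A) {x : H}
    (hc : 0 < ‖S x‖) : normA A ((((‖S x‖⁻¹ : ℝ)) : ℂ) • x) = 1 := by
  rw [normA_eqS hS hS2, map_smul, norm_smul]
  simp only [Complex.norm_real, Real.norm_eq_abs]
  rw [abs_of_pos (inv_pos.mpr hc), inv_mul_cancel₀ hc.ne']

private lemma P5 (hS : IsSelfAdjoint S) (hS2 : S * S = A)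
    (hT : A.comp T = (ContinuousLinearMap.adjoint T).comp A) (x : H) :
    ‖S (T x)‖ ≤ opNormA A T * ‖S x‖ := by
  by_cases hc : ‖S x‖ = 0
  · have h1 := K1 hS hS2 hT x
    rw [hc, mul_zero] at h1
    have h0 : ‖S (T x)‖ = 0 := le_antisymm h1 (norm_nonneg _)
    rw [h0, hc, mul_zero]
  · have hcpos : 0 < ‖S x‖ := (norm_nonneg _).lt_of_ne' hc
    set c := ‖S x‖ with hcd
    have hmem : (c⁻¹ * ‖S (T x)‖) ∈
        {r : ℝ | ∃ x : H, normA A x = 1 ∧ r = normA A (T x)} := by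
      refine ⟨((c⁻¹ : ℝ) : ℂ) • x, unit_vec hS hS2 hcpos, ?_⟩
      rw [normA_eqS hS hS2, map_smul, map_smul, norm_smul]
      simp only [Complex.norm_real, Real.norm_eq_abs]
      rw [abs_of_pos (inv_pos.mpr hcpos)]
    have hle := le_csSup (opA_bdd hS hS2 hT) hmem
    calc ‖S (T x)‖ = c * (c⁻¹ * ‖S (T x)‖) := by field_simp
      _ ≤ c * opNormA A T := mul_le_mul_of_nonneg_left hle hcpos.le
      _ = opNormA A T * c := mul_comm _ _

private lemma wA_bdd (hS : IsSelfAdjoint S) (hS2 : S * S = A)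
    (hT : A.comp T = (ContinuousLinearMap.adjoint T).comp A) :
    BddAbove {r : ℝ | ∃ x : H, normA A x = 1 ∧ r = ‖innerA A (T x) x‖} := by
  refine ⟨‖T‖, ?_⟩
  rintro r ⟨x, hx, rfl⟩
  rw [normA_eqS hS hS2] at hx
  calc ‖innerA A (T x) x‖ ≤ ‖S x‖ * ‖S (T x)‖ := innerA_abs_le hS hS2 (T x) x
    _ ≤ ‖S x‖ * (‖T‖ * ‖S x‖) := mul_le_mul_of_nonneg_left (K1 hS hS2 hT x) (norm_nonneg _)
    _ = ‖T‖ := by rw [hx]; ring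

private lemma P6 (hS : IsSelfAdjoint S) (hS2 : S * S = A)
    (hT : A.comp T = (ContinuousLinearMap.adjoint T).comp A) (u : H) :
    ‖innerA A (T u) u‖ ≤ wA A T * ‖S u‖^2 := by
  by_cases hc : ‖S u‖ = 0
  · have h1 := innerA_abs_le hS hS2 (T u) u
    rw [hc, zero_mul] at h1
    rw [hc]
    calc ‖innerA A (T u) u‖ ≤ 0 := h1
      _ = wA A T * 0^2 := by ring
  · have hcpos : 0 < ‖S u‖ := (norm_nonneg _).lt_of_ne' hc
    set c := ‖S u‖ with hcd
    set v := ((c⁻¹ : ℝ) : ℂ) • u with hv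
    have hval : ‖innerA A (T v) v‖ = c⁻¹^2 * ‖innerA A (T u) u‖ := by
      rw [hv]
      simp only [innerA, map_smul, inner_smul_left, inner_smul_right, norm_mul]
      rw [Complex.norm_conj]
      simp only [Complex.norm_real, Real.norm_eq_abs]
      rw [abs_of_pos (inv_pos.mpr hcpos)]
      ring
    have hmem : ‖innerA A (T v) v‖ ∈
        {r : ℝ | ∃ x : H, normA A x = 1 ∧ r = ‖innerA A (T x) x‖} :=
      ⟨v, unit_vec hS hS2 hcpos, rfl⟩
    have hle := le_csSup (wA_bdd hS hS2 hT) hmem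
    rw [hval] at hle
    calc ‖innerA A (T u) u‖
        = c^2 * (c⁻¹^2 * ‖innerA A (T u) u‖) := by field_simp
      _ ≤ c^2 * wA A T := mul_le_mul_of_nonneg_left hle (by positivity)
      _ = wA A T * c^2 := mul_comm _ _

private lemma P7 (hS : IsSelfAdjoint S) (hS2 : S * S = A) (hAsa : IsSelfAdjoint A)
    (hT : A.comp T = (ContinuousLinearMap.adjoint T).comp A) (x : H) (hx : ‖S x‖ = 1) :
    ‖S (T x)‖ ≤ wA A T := by
  set w := wA A T with hw
  have hw0 : 0 ≤ w := wA_nonneg A T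
  rcases (norm_nonneg (S (T x))).eq_or_lt with h0 | h0
  · rw [← h0]; exact hw0
  set d := ‖S (T x)‖ with hd
  set y := ((d⁻¹ : ℝ) : ℂ) • (T x) with hy
  have hSy : ‖S y‖ = 1 := by
    rw [hy, map_smul, norm_smul]
    simp only [Complex.norm_real, Real.norm_eq_abs]
    rw [abs_of_pos (inv_pos.mpr h0), ← hd, inv_mul_cancel₀ h0.ne']
  have hP : IsSelfAdjoint (A.comp T) := by
    rw [ContinuousLinearMap.isSelfAdjoint_iff']
    rw [ContinuousLinearMap.adjoint_comp, hAsa.adjoint_eq, ← hT]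
  have hq : ∀ u : H, |(⟪u, A (T u)⟫).re| ≤ w * ‖S u‖^2 := by
    intro u
    have h1 := P6 hS hS2 hT u
    have h2 : |(innerA A (T u) u).re| ≤ ‖innerA A (T u) u‖ :=
      Complex.abs_re_le_norm _
    rw [innerA] at h1 h2
    linarith
  have hval : (⟪y, A (T x)⟫).re = d := by
    rw [hy, inner_smul_left]
    rw [← inner_SS hS hS2]
    have h2 : (⟪S (T x), S (T x)⟫ : ℂ) = ((‖S (T x)‖^2 : ℝ) : ℂ) := by
      rw [inner_self_eq_norm_sq_to_K (𝕜 := ℂ)]; norm_cast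
    rw [h2, Complex.conj_ofReal, ← Complex.ofReal_mul, Complex.ofReal_re, ← hd]
    field_simp
  set z := ⟪y, A (T x)⟫ with hz
  have hconj : ⟪x, A (T y)⟫ = (starRingEnd ℂ) z := by
    have h1 : ⟪x, A (T y)⟫ = ⟪(A.comp T) x, y⟫ := by
      have := selfadj_inner_move (A.comp T) hP y x
      simpa [ContinuousLinearMap.comp_apply] using this
    rw [h1, hz]
    simp only [ContinuousLinearMap.comp_apply]
    exact (inner_conj_symm _ _).symm
  have hexp : ⟪x+y, A (T (x+y))⟫ - ⟪x-y, A (T (x-y))⟫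
      = 2 * ((starRingEnd ℂ) z + z) := by
    simp only [map_add, map_sub, inner_add_left, inner_add_right, inner_sub_left,
      inner_sub_right, ← hconj, ← hz]
    ring
  have h4d : (⟪x+y, A (T (x+y))⟫).re - (⟪x-y, A (T (x-y))⟫).re = 4 * d := by
    have := congrArg Complex.re hexp
    rw [Complex.sub_re] at this
    rw [this]
    simp [Complex.mul_re, Complex.add_re, Complex.add_im, Complex.conj_re, Complex.conj_im]
    rw [hval]
    ring
  have hpar : ‖S (x+y)‖^2 + ‖S (x-y)‖^2 = 2 * (‖S x‖^2 + ‖S y‖^2) := by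
    rw [map_add, map_sub]
    have h := parallelogram_law_with_norm ℂ (S x) (S y)
    ring_nf
    ring_nf at h
    linarith
  have final : 4 * d ≤ 4 * w := by
    have h1 := hq (x+y)
    have h2 := hq (x-y)
    have h3 : (⟪x+y, A (T (x+y))⟫).re - (⟪x-y, A (T (x-y))⟫).re
        ≤ w * ‖S (x+y)‖^2 + w * ‖S (x-y)‖^2 := by
      have := le_abs_self (⟪x+y, A (T (x+y))⟫).re
      have := neg_abs_le (⟪x-y, A (T (x-y))⟫).re
      linarith
    rw [h4d] at h3
    calc (4:ℝ) * d ≤ w * ‖S (x+y)‖^2 + w * ‖S (x-y)‖^2 := h3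
      _ = w * (‖S (x+y)‖^2 + ‖S (x-y)‖^2) := by ring
      _ = w * (2 * (1 + 1)) := by rw [hpar, hx, hSy]; norm_num
      _ = 4 * w := by ring
  linarith

end SA

set_option maxHeartbeats 2000000 in
theorem stmt2 (A : H →L[ℂ] H) (hA : A.IsPositive) (hA0 : A ≠ 0)
    (B C : H →L[ℂ] H)
    (hB : A.comp B = (ContinuousLinearMap.adjoint B).comp A)
    (hC : A.comp C = (ContinuousLinearMap.adjoint C).comp A) :
    (1/2) * opNormA A (B * B + C * C)
      + (1/2) * max (opNormA A B) (opNormA A C)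
          * |opNormA A (B + C) - opNormA A (B - C)|
      ≤ (wAe A B C)^2 := by
  have h0A : (0 : H →L[ℂ] H) ≤ A := (ContinuousLinearMap.nonneg_iff_isPositive A).mpr hA
  obtain ⟨S, hS, hS2⟩ : ∃ S : H →L[ℂ] H, IsSelfAdjoint S ∧ S * S = A :=
    ⟨CFC.sqrt A, (CFC.sqrt_nonneg A).isSelfAdjoint, CFC.sqrt_mul_sqrt_self A h0A⟩
  have hAsa : IsSelfAdjoint A := hA.isSelfAdjoint
  have hBC : A.comp (B+C) = (ContinuousLinearMap.adjoint (B+C)).comp A := by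
    rw [ContinuousLinearMap.comp_add, hB, hC, map_add, ContinuousLinearMap.add_comp]
  have hBC' : A.comp (B-C) = (ContinuousLinearMap.adjoint (B-C)).comp A := by
    rw [ContinuousLinearMap.comp_sub, hB, hC, map_sub, ContinuousLinearMap.sub_comp]
  have hs0 : 0 ≤ opNormA A (B+C) := opA_nonneg A _
  have ht0 : 0 ≤ opNormA A (B-C) := opA_nonneg A _
  have hw0 : 0 ≤ wAe A B C := by
    unfold wAe
    exact Real.sSup_nonneg (by rintro r ⟨x, hx, rfl⟩; exact Real.sqrt_nonneg _)
  have hwbdd : BddAbove {r : ℝ | ∃ x : H, normA A x = 1 ∧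
      r = Real.sqrt ((‖innerA A (B x) x‖)^2 + (‖innerA A (C x) x‖)^2)} := by
    refine ⟨Real.sqrt (‖B‖^2 + ‖C‖^2), ?_⟩
    rintro r ⟨x, hx, rfl⟩
    rw [normA_eqS hS hS2] at hx
    have hb : ‖innerA A (B x) x‖ ≤ ‖B‖ := by
      calc ‖innerA A (B x) x‖ ≤ ‖S x‖ * ‖S (B x)‖ := innerA_abs_le hS hS2 (B x) x
        _ ≤ ‖S x‖ * (‖B‖ * ‖S x‖) := mul_le_mul_of_nonneg_left (K1 hS hS2 hB x) (norm_nonneg _)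
        _ = ‖B‖ := by rw [hx]; ring
    have hcc : ‖innerA A (C x) x‖ ≤ ‖C‖ := by
      calc ‖innerA A (C x) x‖ ≤ ‖S x‖ * ‖S (C x)‖ := innerA_abs_le hS hS2 (C x) x
        _ ≤ ‖S x‖ * (‖C‖ * ‖S x‖) := mul_le_mul_of_nonneg_left (K1 hS hS2 hC x) (norm_nonneg _)
        _ = ‖C‖ := by rw [hx]; ring
    apply Real.sqrt_le_sqrt
    have hb2 : (‖innerA A (B x) x‖)^2 ≤ ‖B‖^2 := by
      have := norm_nonneg (innerA A (B x) x); nlinarith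
    have hc2 : (‖innerA A (C x) x‖)^2 ≤ ‖C‖^2 := by
      have := norm_nonneg (innerA A (C x) x); nlinarith
    linarith
  have hptw : ∀ x : H, ‖S x‖ = 1 →
      ‖innerA A (B x) x‖ + ‖innerA A (C x) x‖
        ≤ Real.sqrt 2 * wAe A B C := by
    intro x hx
    set a := ‖innerA A (B x) x‖ with hadef
    set b := ‖innerA A (C x) x‖ with hbdef
    have ha0 : 0 ≤ a := norm_nonneg _
    have hb0 : 0 ≤ b := norm_nonneg _
    have hmem : Real.sqrt (a^2 + b^2) ∈ {r : ℝ | ∃ x : H, normA A x = 1 ∧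
        r = Real.sqrt ((‖innerA A (B x) x‖)^2 + (‖innerA A (C x) x‖)^2)} :=
      ⟨x, by rw [normA_eqS hS hS2]; exact hx, rfl⟩
    have hsq : Real.sqrt (a^2 + b^2) ≤ wAe A B C := by
      have := le_csSup hwbdd hmem
      unfold wAe
      exact this
    calc a + b = Real.sqrt ((a+b)^2) := (Real.sqrt_sq (by positivity)).symm
      _ ≤ Real.sqrt (2 * (a^2 + b^2)) := Real.sqrt_le_sqrt (by nlinarith [sq_nonneg (a-b)])
      _ = Real.sqrt 2 * Real.sqrt (a^2 + b^2) := Real.sqrt_mul (by norm_num) _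
      _ ≤ Real.sqrt 2 * wAe A B C := mul_le_mul_of_nonneg_left hsq (Real.sqrt_nonneg 2)
  have hwA_le : ∀ (D : H →L[ℂ] H), A.comp D = (ContinuousLinearMap.adjoint D).comp A →
      (∀ u : H, ‖innerA A (D u) u‖
        ≤ ‖innerA A (B u) u‖ + ‖innerA A (C u) u‖) →
      opNormA A D ≤ Real.sqrt 2 * wAe A B C := by
    intro D hD htri
    unfold opNormA
    apply Real.sSup_le _ (mul_nonneg (Real.sqrt_nonneg 2) hw0)
    rintro r ⟨x, hx, rfl⟩
    rw [normA_eqS hS hS2] at hx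
    rw [normA_eqS hS hS2]
    calc ‖S (D x)‖ ≤ wA A D := P7 hS hS2 hAsa hD x hx
      _ ≤ Real.sqrt 2 * wAe A B C := by
          unfold wA
          apply Real.sSup_le _ (mul_nonneg (Real.sqrt_nonneg 2) hw0)
          rintro r ⟨u, hu, rfl⟩
          rw [normA_eqS hS hS2] at hu
          exact le_trans (htri u) (hptw u hu)
  have hs_le : opNormA A (B+C) ≤ Real.sqrt 2 * wAe A B C := by
    apply hwA_le (B+C) hBC
    intro u
    have h1 : innerA A ((B+C) u) u = innerA A (B u) u + innerA A (C u) u := by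
      simp [innerA, ContinuousLinearMap.add_apply, map_add, inner_add_right]
    rw [h1]
    exact norm_add_le _ _
  have ht_le : opNormA A (B-C) ≤ Real.sqrt 2 * wAe A B C := by
    apply hwA_le (B-C) hBC'
    intro u
    have h1 : innerA A ((B-C) u) u = innerA A (B u) u - innerA A (C u) u := by
      simp [innerA, ContinuousLinearMap.sub_apply, map_sub, inner_sub_right]
    rw [h1, sub_eq_add_neg]
    calc ‖innerA A (B u) u + -(innerA A (C u) u)‖
        ≤ ‖innerA A (B u) u‖ + ‖-(innerA A (C u) u)‖ :=
          norm_add_le _ _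
      _ = ‖innerA A (B u) u‖ + ‖innerA A (C u) u‖ := by
          rw [norm_neg]
  have hs2 : (opNormA A (B+C))^2 ≤ 2 * (wAe A B C)^2 := by
    nlinarith [Real.sq_sqrt (show (0:ℝ) ≤ 2 by norm_num), Real.sqrt_nonneg 2]
  have ht2 : (opNormA A (B-C))^2 ≤ 2 * (wAe A B C)^2 := by
    nlinarith [Real.sq_sqrt (show (0:ℝ) ≤ 2 by norm_num), Real.sqrt_nonneg 2]
  have hN : opNormA A (B*B + C*C)
      ≤ (opNormA A (B+C) * opNormA A (B+C) + opNormA A (B-C) * opNormA A (B-C)) / 2 := by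
    refine Real.sSup_le ?_ (by positivity)
    rintro r ⟨x, hx, rfl⟩
    rw [normA_eqS hS hS2] at hx
    rw [normA_eqS hS hS2]
    have hvec : (B*B + C*C) x + (B*B + C*C) x = (B+C) ((B+C) x) + (B-C) ((B-C) x) := by
      simp only [ContinuousLinearMap.add_apply, ContinuousLinearMap.sub_apply,
        ContinuousLinearMap.mul_apply, map_add, map_sub]
      abel
    have h2 : (2:ℝ) * ‖S ((B*B + C*C) x)‖
        = ‖S ((B+C) ((B+C) x)) + S ((B-C) ((B-C) x))‖ := by
      rw [← map_add, ← hvec, map_add,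
        show S ((B*B + C*C) x) + S ((B*B + C*C) x) = (2:ℝ) • S ((B*B + C*C) x) from
          (two_smul ℝ _).symm, norm_smul]
      simp
    have h3 : ‖S ((B+C) ((B+C) x))‖ ≤ opNormA A (B+C) * opNormA A (B+C) := by
      calc ‖S ((B+C) ((B+C) x))‖ ≤ opNormA A (B+C) * ‖S ((B+C) x)‖ := P5 hS hS2 hBC _
        _ ≤ opNormA A (B+C) * (opNormA A (B+C) * ‖S x‖) :=
            mul_le_mul_of_nonneg_left (P5 hS hS2 hBC x) hs0
        _ = opNormA A (B+C) * opNormA A (B+C) := by rw [hx, mul_one]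
    have h4 : ‖S ((B-C) ((B-C) x))‖ ≤ opNormA A (B-C) * opNormA A (B-C) := by
      calc ‖S ((B-C) ((B-C) x))‖ ≤ opNormA A (B-C) * ‖S ((B-C) x)‖ := P5 hS hS2 hBC' _
        _ ≤ opNormA A (B-C) * (opNormA A (B-C) * ‖S x‖) :=
            mul_le_mul_of_nonneg_left (P5 hS hS2 hBC' x) ht0
        _ = opNormA A (B-C) * opNormA A (B-C) := by rw [hx, mul_one]
    have h5 := norm_add_le (S ((B+C) ((B+C) x))) (S ((B-C) ((B-C) x)))
    linarith
  have hnB : opNormA A B ≤ (opNormA A (B+C) + opNormA A (B-C)) / 2 := by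
    refine Real.sSup_le ?_ (by positivity)
    rintro r ⟨x, hx, rfl⟩
    rw [normA_eqS hS hS2] at hx
    rw [normA_eqS hS hS2]
    have hvec : B x + B x = (B+C) x + (B-C) x := by
      simp only [ContinuousLinearMap.add_apply, ContinuousLinearMap.sub_apply]
      abel
    have h2 : (2:ℝ) * ‖S (B x)‖ = ‖S ((B+C) x) + S ((B-C) x)‖ := by
      rw [← map_add, ← hvec, map_add,
        show S (B x) + S (B x) = (2:ℝ) • S (B x) from (two_smul ℝ _).symm, norm_smul]
      simp
    have h3 : ‖S ((B+C) x)‖ ≤ opNormA A (B+C) := by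
      have := P5 hS hS2 hBC x; rwa [hx, mul_one] at this
    have h4 : ‖S ((B-C) x)‖ ≤ opNormA A (B-C) := by
      have := P5 hS hS2 hBC' x; rwa [hx, mul_one] at this
    have h5 := norm_add_le (S ((B+C) x)) (S ((B-C) x))
    linarith
  have hnC : opNormA A C ≤ (opNormA A (B+C) + opNormA A (B-C)) / 2 := by
    refine Real.sSup_le ?_ (by positivity)
    rintro r ⟨x, hx, rfl⟩
    rw [normA_eqS hS hS2] at hx
    rw [normA_eqS hS hS2]
    have hvec : C x + C x = (B+C) x - (B-C) x := by
      simp only [ContinuousLinearMap.add_apply, ContinuousLinearMap.sub_apply]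
      abel
    have h2 : (2:ℝ) * ‖S (C x)‖ = ‖S ((B+C) x) - S ((B-C) x)‖ := by
      rw [← map_sub, ← hvec, map_add,
        show S (C x) + S (C x) = (2:ℝ) • S (C x) from (two_smul ℝ _).symm, norm_smul]
      simp
    have h3 : ‖S ((B+C) x)‖ ≤ opNormA A (B+C) := by
      have := P5 hS hS2 hBC x; rwa [hx, mul_one] at this
    have h4 : ‖S ((B-C) x)‖ ≤ opNormA A (B-C) := by
      have := P5 hS hS2 hBC' x; rwa [hx, mul_one] at this
    have h5 := norm_sub_le (S ((B+C) x)) (S ((B-C) x))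
    linarith
  have hM : max (opNormA A B) (opNormA A C) ≤ (opNormA A (B+C) + opNormA A (B-C)) / 2 :=
    max_le hnB hnC
  have hM0 : 0 ≤ max (opNormA A B) (opNormA A C) :=
    le_trans (opA_nonneg A B) (le_max_left _ _)
  rcases le_total (opNormA A (B+C)) (opNormA A (B-C)) with hst | hst
  · rw [abs_of_nonpos (by linarith : opNormA A (B+C) - opNormA A (B-C) ≤ 0)]
    have hprod : max (opNormA A B) (opNormA A C) * (opNormA A (B-C) - opNormA A (B+C))
        ≤ (opNormA A (B+C) + opNormA A (B-C)) / 2 * (opNormA A (B-C) - opNormA A (B+C)) :=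
      mul_le_mul_of_nonneg_right hM (by linarith)
    nlinarith [hN, hs2, ht2, hprod]
  · rw [abs_of_nonneg (by linarith : 0 ≤ opNormA A (B+C) - opNormA A (B-C))]
    have hprod : max (opNormA A B) (opNormA A C) * (opNormA A (B+C) - opNormA A (B-C))
        ≤ (opNormA A (B+C) + opNormA A (B-C)) / 2 * (opNormA A (B+C) - opNormA A (B-C)) :=
      mul_le_mul_of_nonneg_right hM (by linarith)
    nlinarith [hN, hs2, ht2, hprod]
end
end

section
/- Let x ∈ H with ‖x‖_A = 1 and let T be the operator on H defined by Tz = ⟨z,x⟩_A · x. Then for every complex number α, one has |α − 1| ≤ ‖αT − I‖_A ≤ max{1, |α − 1|}, where I is the identity operator. Moreover, if |α − 1| ≥ 1, then ‖αT − I‖_A = |α − 1|. -/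
noncomputable section

open scoped ComplexInnerProductSpace

variable {H : Type*} [NormedAddCommGroup H] [InnerProductSpace ℂ H] [CompleteSpace H]

lemma innerA_conj (A : H →L[ℂ] H) (hA : A.IsPositive) (u v : H) :
    (starRingEnd ℂ) (innerA A u v) = innerA A v u := by
  unfold innerA
  rw [inner_conj_symm]
  exact hA.1 u v

lemma innerA_self_nonneg (A : H →L[ℂ] H) (hA : A.IsPositive) (z : H) :
    0 ≤ (innerA A z z).re := by
  have h := hA.2 z
  have e : (innerA A z z).re = ⟪A z, z⟫.re := by
    rw [← innerA_conj A hA z z]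
    simp [innerA, inner_conj_symm]
  rw [e]
  simpa [ContinuousLinearMap.reApplyInnerSelf] using h

/-- Pre-inner-product core induced by a positive operator. -/
def coreA (A : H →L[ℂ] H) (hA : A.IsPositive) : PreInnerProductSpace.Core ℂ H where
  inner u v := ⟪u, A v⟫
  conj_inner_symm u v := by
    have := innerA_conj A hA u v
    simpa [innerA] using this
  re_inner_nonneg z := innerA_self_nonneg A hA z
  add_left x y z := inner_add_left x y (A z)
  smul_left x y r := inner_smul_left x (A y) r

lemma csA (A : H →L[ℂ] H) (hA : A.IsPositive) (u v : H) :
    ‖innerA A u v‖ ^ 2 ≤ (innerA A v v).re * (innerA A u u).re := by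
  have h := @InnerProductSpace.Core.inner_mul_inner_self_le ℂ H _ _ _ (coreA A hA) v u
  have h2 : ‖⟪v, A u⟫‖ * ‖⟪u, A v⟫‖ ≤ Complex.re (⟪v, A v⟫ : ℂ) * Complex.re (⟪u, A u⟫ : ℂ) := h
  have habs : ‖⟪u, A v⟫‖ = ‖⟪v, A u⟫‖ := by
    have e : (starRingEnd ℂ) ⟪u, A v⟫ = ⟪v, A u⟫ := innerA_conj A hA v u
    rw [← e, RCLike.norm_conj]
  rw [habs, ← sq] at h2
  simpa [innerA] using h2

omit [CompleteSpace H] in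
lemma normA_one_re {A : H →L[ℂ] H} {z : H} (hz : normA A z = 1) :
    (innerA A z z).re = 1 := Real.sqrt_eq_one.mp hz

theorem stmt6 (A : H →L[ℂ] H) (hA : A.IsPositive) (hA0 : A ≠ 0)
    (x : H) (hx : normA A x = 1)
    (T : H →L[ℂ] H) (hT : ∀ z : H, T z = innerA A z x • x) (α : ℂ) :
    (‖α - 1‖ ≤ opNormA A (α • T - 1)
      ∧ opNormA A (α • T - 1) ≤ max 1 (‖α - 1‖))
    ∧ (1 ≤ ‖α - 1‖ → opNormA A (α • T - 1) = ‖α - 1‖) := by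
  have hxx : innerA A x x = 1 := by
    have him : (innerA A x x).im = 0 :=
      Complex.conj_eq_iff_im.mp (innerA_conj A hA x x)
    exact Complex.ext (normA_one_re hx) (by simpa using him)
  set β := ‖α - 1‖ with hβ
  have key : ∀ z : H, (innerA A ((α • T - 1) z) ((α • T - 1) z)).re
      = (β ^ 2 - 1) * ‖innerA A z x‖ ^ 2 + (innerA A z z).re := by
    intro z
    have hw : (α • T - 1) z = (α * innerA A z x) • x - z := by
      simp [hT z, smul_smul]
    rw [hw]
    set c := innerA A z x with hc
    have hxz : (⟪x, A z⟫ : ℂ) = c := rfl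
    have hzx : (⟪z, A x⟫ : ℂ) = (starRingEnd ℂ) c := (innerA_conj A hA z x).symm
    have expand : innerA A ((α * c) • x - z) ((α * c) • x - z)
        = (starRingEnd ℂ) (α * c) * (α * c) * innerA A x x
          - (starRingEnd ℂ) (α * c) * c - (α * c) * (starRingEnd ℂ) c + innerA A z z := by
      simp only [innerA, map_sub, map_smul, inner_sub_left, inner_sub_right,
        inner_smul_left, inner_smul_right, hxz, hzx]
      ring
    rw [expand, hxx]
    simp only [hβ, Complex.sq_norm, Complex.normSq_apply, Complex.add_re, Complex.sub_re,
      Complex.mul_re, Complex.mul_im, Complex.conj_re, Complex.conj_im, Complex.one_re,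
      Complex.one_im, Complex.sub_im]
    ring
  set S : Set ℝ := {r : ℝ | ∃ z : H, normA A z = 1 ∧ r = normA A ((α • T - 1) z)} with hS
  have hmem : β ∈ S := by
    refine ⟨x, hx, ?_⟩
    have : normA A ((α • T - 1) x) = Real.sqrt (β ^ 2) := by
      unfold normA
      rw [key x, hxx]
      norm_num
    rw [this, Real.sqrt_sq (norm_nonneg _)]
  have hbound : ∀ r ∈ S, r ≤ max 1 β := by
    rintro r ⟨z, hz, rfl⟩
    have hcz : ‖innerA A z x‖ ^ 2 ≤ 1 := by
      have := csA A hA z x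
      rw [normA_one_re hx, normA_one_re hz] at this
      simpa using this
    have hcz0 : 0 ≤ ‖innerA A z x‖ ^ 2 := sq_nonneg _
    have hval : normA A ((α • T - 1) z)
        = Real.sqrt ((β ^ 2 - 1) * ‖innerA A z x‖ ^ 2 + 1) := by
      unfold normA
      rw [key z, normA_one_re hz]
    rw [hval]
    rcases le_total β 1 with hb | hb
    · refine le_trans ?_ (le_max_left 1 β)
      have hb2 : β ^ 2 - 1 ≤ 0 := by nlinarith [norm_nonneg (α - 1)]
      have h1 : (β ^ 2 - 1) * ‖innerA A z x‖ ^ 2 + 1 ≤ 1 := by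
        nlinarith [mul_nonpos_of_nonpos_of_nonneg hb2 hcz0]
      calc Real.sqrt _ ≤ Real.sqrt 1 := Real.sqrt_le_sqrt h1
        _ = 1 := Real.sqrt_one
    · refine le_trans ?_ (le_max_right 1 β)
      have hb2 : 0 ≤ β ^ 2 - 1 := by nlinarith
      have h1 : (β ^ 2 - 1) * ‖innerA A z x‖ ^ 2 + 1 ≤ β ^ 2 := by
        nlinarith [mul_le_mul_of_nonneg_left hcz hb2]
      calc Real.sqrt _ ≤ Real.sqrt (β ^ 2) := Real.sqrt_le_sqrt h1
        _ = β := Real.sqrt_sq (norm_nonneg _)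
  have hop : opNormA A (α • T - 1) = sSup S := rfl
  have hlow : β ≤ opNormA A (α • T - 1) := by
    rw [hop]
    exact le_csSup ⟨max 1 β, hbound⟩ hmem
  have hup : opNormA A (α • T - 1) ≤ max 1 β := by
    rw [hop]
    exact csSup_le ⟨β, hmem⟩ hbound
  refine ⟨⟨hlow, hup⟩, fun h1 => ?_⟩
  refine le_antisymm ?_ hlow
  rwa [max_eq_right h1] at hup
end
end
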